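/- Let p > 1 and let φ: ℝ → ℝ be defined by φ(x) = 1 for |x| ≤ 1/2, φ(x) = exp(−1/(1−x²)) / (exp(−1/(x²−1/4)) + exp(−1/(1−x²))) for 1/2 < |x| < 1, and φ(x) = 0 for |x| ≥ 1. Then there exists a constant C > 0 such that |φ'(x)| ≤ C·φ(x)^{1/p} for all x ∈ ℝ. -/

import Mathlib

open Real

noncomputable def phi : ℝ → ℝ := fun x =>
  if |x| ≤ 1/2 then 1
  else if |x| < 1 then
    Real.exp (-1/(1-x^2)) / (Real.exp (-1/(x^2-1/4)) + Real.exp (-1/(1-x^2)))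
  else 0

lemma exp_neg_le4 (y : ℝ) (hy : 0 < y) : Real.exp (-y) ≤ 4 / y^2 := by
  have h1 : y/2 + 1 ≤ Real.exp (y/2) := Real.add_one_le_exp _
  have h2 : Real.exp y = (Real.exp (y/2))^2 := by
    rw [sq, ← Real.exp_add]; ring_nf
  have h3 : y^2/4 ≤ Real.exp y := by nlinarith [Real.exp_pos (y/2)]
  rw [Real.exp_neg]
  have h4 : (0:ℝ) < y^2/4 := by positivity
  calc (Real.exp y)⁻¹ ≤ (y^2/4)⁻¹ := inv_anti₀ h4 h3
    _ = 4/y^2 := by field_simp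

lemma phi_eq_mid {x : ℝ} (h1 : 1/2 < x) (h2 : x < 1) :
    phi x = Real.exp (-1/(1-x^2)) / (Real.exp (-1/(x^2-1/4)) + Real.exp (-1/(1-x^2))) := by
  have hx : |x| = x := abs_of_pos (by linarith)
  simp only [phi, hx]
  rw [if_neg (by linarith), if_pos h2]

lemma hasDerivAt_phi_mid {x : ℝ} (h1 : 1/2 < x) (h2 : x < 1) :
    HasDerivAt phi
      (Real.exp (-1/(1-x^2)) * Real.exp (-1/(x^2-1/4)) *
        (-(2*x) * (1/(1-x^2)^2 + 1/(x^2-1/4)^2)) /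
        (Real.exp (-1/(x^2-1/4)) + Real.exp (-1/(1-x^2)))^2) x := by
  have ht : (0:ℝ) < 1 - x^2 := by nlinarith
  have hs : (0:ℝ) < x^2 - 1/4 := by nlinarith
  have hG : HasDerivAt (fun y : ℝ => Real.exp (-1/(1-y^2)))
      (Real.exp (-1/(1-x^2)) * (-(2*x)/(1-x^2)^2)) x := by
    have hd : HasDerivAt (fun y : ℝ => 1 - y^2) (-(2*x)) x := by
      simpa using ((hasDerivAt_pow 2 x).const_sub 1)
    have hu : HasDerivAt (fun y : ℝ => -1/(1-y^2))
        ((0 * (1-x^2) - (-1) * (-(2*x)))/(1-x^2)^2) x :=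
      (hasDerivAt_const x (-1)).div hd ht.ne'
    have := hu.exp
    convert this using 1
    field_simp
    ring
  have hH : HasDerivAt (fun y : ℝ => Real.exp (-1/(y^2-1/4)))
      (Real.exp (-1/(x^2-1/4)) * ((2*x)/(x^2-1/4)^2)) x := by
    have hd : HasDerivAt (fun y : ℝ => y^2 - 1/4) (2*x) x := by
      simpa using ((hasDerivAt_pow 2 x).sub_const (1/4))
    have hu : HasDerivAt (fun y : ℝ => -1/(y^2-1/4))
        ((0 * (x^2-1/4) - (-1) * (2*x))/(x^2-1/4)^2) x :=
      (hasDerivAt_const x (-1)).div hd hs.ne'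
    have := hu.exp
    convert this using 1
    field_simp
    ring
  have hB : HasDerivAt (fun y : ℝ => Real.exp (-1/(y^2-1/4)) + Real.exp (-1/(1-y^2)))
      (Real.exp (-1/(x^2-1/4)) * ((2*x)/(x^2-1/4)^2) +
       Real.exp (-1/(1-x^2)) * (-(2*x)/(1-x^2)^2)) x := hH.add hG
  have hBne : Real.exp (-1/(x^2-1/4)) + Real.exp (-1/(1-x^2)) ≠ 0 := by
    positivity
  have hf : HasDerivAt (fun y : ℝ => Real.exp (-1/(1-y^2)) /
      (Real.exp (-1/(y^2-1/4)) + Real.exp (-1/(1-y^2)))) _ x := hG.div hB hBne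
  have hev : phi =ᶠ[nhds x] (fun y : ℝ => Real.exp (-1/(1-y^2)) /
      (Real.exp (-1/(y^2-1/4)) + Real.exp (-1/(1-y^2)))) := by
    have hmem : Set.Ioo (1/2 : ℝ) 1 ∈ nhds x := Ioo_mem_nhds h1 h2
    filter_upwards [hmem] with y hy
    exact phi_eq_mid hy.1 hy.2
  have := hf.congr_of_eventuallyEq hev
  convert this using 1
  rfl
  rfl
  set G := Real.exp (-1/(1-x^2))
  set H := Real.exp (-1/(x^2-1/4))
  ring

set_option maxHeartbeats 1000000 in
lemma est {p x : ℝ} (hp : 1 < p) (h1 : 1/2 < x) (h2 : x < 1) :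
    |Real.exp (-1/(1-x^2)) * Real.exp (-1/(x^2-1/4)) *
        (-(2*x) * (1/(1-x^2)^2 + 1/(x^2-1/4)^2)) /
        (Real.exp (-1/(x^2-1/4)) + Real.exp (-1/(1-x^2)))^2|
      ≤ (8 * Real.exp 3 * (1/(1-1/p)^2 + 1)) * phi x ^ (1/p) := by
  have hp0 : (0:ℝ) < p := by linarith
  have hq0' : 0 < 1/p := by positivity
  have hq1' : 1/p < 1 := by rw [div_lt_one hp0]; linarith
  rw [phi_eq_mid h1 h2]
  obtain ⟨q, hqdef⟩ : ∃ q : ℝ, q = 1/p := ⟨_, rfl⟩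
  rw [← hqdef]
  obtain ⟨a, hadef⟩ : ∃ a : ℝ, a = 1 - q := ⟨_, rfl⟩
  rw [← hadef]
  have hq0 : 0 < q := by rw [hqdef]; exact hq0'
  have hq1 : q < 1 := by rw [hqdef]; exact hq1'
  have ha0 : 0 < a := by rw [hadef]; linarith
  have ha1 : a ≤ 1 := by rw [hadef]; linarith
  have hqa : q + a = 1 := by rw [hadef]; ring
  have hx0 : (0:ℝ) < x := by linarith
  have ht' : (0:ℝ) < 1 - x^2 := by nlinarith
  have hs' : (0:ℝ) < x^2 - 1/4 := by nlinarith
  obtain ⟨t, htdef⟩ : ∃ t : ℝ, t = 1 - x^2 := ⟨_, rfl⟩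
  obtain ⟨s, hsdef⟩ : ∃ s : ℝ, s = x^2 - 1/4 := ⟨_, rfl⟩
  rw [← htdef, ← hsdef]
  have ht : 0 < t := by rw [htdef]; exact ht'
  have hs : 0 < s := by rw [hsdef]; exact hs'
  have hts : t + s = 3/4 := by rw [htdef, hsdef]; ring
  obtain ⟨G, hGdef⟩ : ∃ g : ℝ, g = Real.exp (-1/t) := ⟨_, rfl⟩
  obtain ⟨H, hHdef⟩ : ∃ h : ℝ, h = Real.exp (-1/s) := ⟨_, rfl⟩
  rw [← hGdef, ← hHdef]
  have hG0 : 0 < G := by rw [hGdef]; exact Real.exp_pos _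
  have hH0 : 0 < H := by rw [hHdef]; exact Real.exp_pos _
  obtain ⟨B, hBdef⟩ : ∃ b : ℝ, b = H + G := ⟨_, rfl⟩
  rw [← hBdef]
  have hB0 : 0 < B := by rw [hBdef]; positivity
  have hGB : G ≤ B := by rw [hBdef]; exact le_add_of_nonneg_left hH0.le
  have hHB : H ≤ B := by rw [hBdef]; exact le_add_of_nonneg_right hG0.le
  have hBlow : Real.exp (-3) ≤ B := by
    rcases le_or_gt (3/8) t with h | h
    · have hle : Real.exp (-3) ≤ G := by
        rw [hGdef]
        apply Real.exp_le_exp.mpr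
        rw [neg_div]
        have : 1/t ≤ 8/3 := by rw [div_le_div_iff₀ ht (by norm_num)]; linarith
        linarith
      linarith
    · have hs38 : (3/8:ℝ) ≤ s := by linarith
      have hle : Real.exp (-3) ≤ H := by
        rw [hHdef]
        apply Real.exp_le_exp.mpr
        rw [neg_div]
        have : 1/s ≤ 8/3 := by rw [div_le_div_iff₀ hs (by norm_num)]; linarith
        linarith
      linarith
  have hGa : G ^ a ≤ 4 * t^2 / a^2 := by
    have he : G ^ a = Real.exp (-(a/t)) := by
      rw [hGdef, ← Real.exp_mul]; ring_nf
    rw [he]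
    calc Real.exp (-(a/t)) ≤ 4/(a/t)^2 := exp_neg_le4 _ (by positivity)
      _ = 4 * t^2 / a^2 := by field_simp
  have hHle : H ≤ 4 * s^2 := by
    have he : H = Real.exp (-(1/s)) := by rw [hHdef]; ring_nf
    rw [he]
    calc Real.exp (-(1/s)) ≤ 4/(1/s)^2 := exp_neg_le4 _ (by positivity)
      _ = 4 * s^2 := by field_simp
  have hBa : Real.exp (-3) ≤ B ^ a := by
    calc Real.exp (-3) ≤ Real.exp (-3*a) := by
          apply Real.exp_le_exp.mpr; nlinarith
      _ = Real.exp (-3) ^ a := by rw [← Real.exp_mul]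
      _ ≤ B ^ a := Real.rpow_le_rpow (Real.exp_pos _).le hBlow ha0.le
  have hinvBa : 1/B^a ≤ Real.exp 3 := by
    rw [div_le_iff₀ (by positivity)]
    calc (1:ℝ) = Real.exp 3 * Real.exp (-3) := by
          rw [← Real.exp_add]; norm_num
      _ ≤ Real.exp 3 * B^a := mul_le_mul_of_nonneg_left hBa (Real.exp_pos _).le
  have hinvB : 1/B ≤ Real.exp 3 := by
    rw [div_le_iff₀ hB0]
    calc (1:ℝ) = Real.exp 3 * Real.exp (-3) := by rw [← Real.exp_add]; norm_num
      _ ≤ Real.exp 3 * B := mul_le_mul_of_nonneg_left hBlow (Real.exp_pos _).le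
  have hGBq : (G/B) ^ q = G^q / B^q := Real.div_rpow hG0.le hB0.le q
  have hGBq_pos : 0 < (G/B)^q := Real.rpow_pos_of_pos (by positivity) q
  -- claim 1
  have claim1 : G*H/(B^2*t^2) ≤ (G/B)^q * (4/a^2 * Real.exp 3) := by
    have e1 : G*H/(B^2*t^2) ≤ G*B/(B^2*t^2) := by gcongr
    have e1' : G*B/(B^2*t^2) = G/(B*t^2) := by
      rw [pow_two, mul_comm G B, mul_assoc B B (t^2)]
      exact mul_div_mul_left G (B*t^2) hB0.ne'
    have hGs : G = G^q * G^a := by rw [← Real.rpow_add hG0, hqa, Real.rpow_one]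
    have hBs : B = B^q * B^a := by rw [← Real.rpow_add hB0, hqa, Real.rpow_one]
    have e2 : G/(B*t^2) = (G^q/B^q) * ((G^a/t^2) * (1/B^a)) := by
      calc G/(B*t^2) = (G^q*G^a)/((B^q*B^a)*t^2) := by rw [← hGs, ← hBs]
        _ = (G^q/B^q) * ((G^a/t^2) * (1/B^a)) := by ring
    have e3 : (G^q/B^q) * ((G^a/t^2) * (1/B^a)) ≤ (G^q/B^q) * (4/a^2 * Real.exp 3) := by
      apply mul_le_mul_of_nonneg_left _ (by positivity)
      have hGat : G^a/t^2 ≤ 4/a^2 := by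
        rw [div_le_div_iff₀ (by positivity) (by positivity)]
        calc G^a * a^2 ≤ (4*t^2/a^2) * a^2 :=
              mul_le_mul_of_nonneg_right hGa (by positivity)
          _ = 4 * t^2 := by field_simp
      calc (G^a/t^2) * (1/B^a) ≤ (4/a^2) * Real.exp 3 :=
            mul_le_mul hGat hinvBa (by positivity) (by positivity)
        _ = 4/a^2 * Real.exp 3 := by ring
    rw [hGBq]
    calc G*H/(B^2*t^2) ≤ G*B/(B^2*t^2) := e1
      _ = G/(B*t^2) := e1'
      _ = (G^q/B^q) * ((G^a/t^2) * (1/B^a)) := e2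
      _ ≤ (G^q/B^q) * (4/a^2 * Real.exp 3) := e3
  -- claim 2
  have claim2 : G*H/(B^2*s^2) ≤ (G/B)^q * (4 * Real.exp 3) := by
    have e1 : G*H/(B^2*s^2) = (G/B) * ((H/s^2) * (1/B)) := by
      ring
    have hGBle : G/B ≤ (G/B)^q := by
      have h01 : G/B ≤ 1 := by rw [div_le_one hB0]; exact hGB
      have := Real.rpow_le_rpow_of_exponent_ge (by positivity : (0:ℝ) < G/B) h01 hq1.le
      rwa [Real.rpow_one] at this
    have hHs : H/s^2 ≤ 4 := by
      rw [div_le_iff₀ (by positivity)]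
      linarith [hHle]
    rw [e1]
    have h4e : (H/s^2) * (1/B) ≤ 4 * Real.exp 3 :=
      mul_le_mul hHs hinvB (by positivity) (by norm_num)
    exact mul_le_mul hGBle h4e (by positivity) hGBq_pos.le
  -- assemble
  have hx2 : (2*x : ℝ) ≤ 2 := by linarith
  have habs : |G * H * (-(2*x) * (1/t^2 + 1/s^2)) / B^2|
      = G*H*((2*x)*(1/t^2 + 1/s^2))/B^2 := by
    have hle : G * H * (-(2*x) * (1/t^2 + 1/s^2)) / B^2 ≤ 0 := by
      apply div_nonpos_of_nonpos_of_nonneg _ (by positivity)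
      have h' : (0:ℝ) ≤ G * H * ((2*x) * (1/t^2 + 1/s^2)) := by positivity
      have heq : G * H * (-(2*x) * (1/t^2 + 1/s^2)) = -(G * H * ((2*x) * (1/t^2 + 1/s^2))) := by
        ring
      rw [heq]
      exact neg_nonpos.mpr h'
    rw [abs_of_nonpos hle]; ring
  rw [habs]
  have hterm1 : (2*x) * (G*H/(B^2*t^2)) ≤ 2 * ((G/B)^q * (4/a^2 * Real.exp 3)) :=
    mul_le_mul hx2 claim1 (by positivity) (by norm_num)
  have hterm2 : (2*x) * (G*H/(B^2*s^2)) ≤ 2 * ((G/B)^q * (4 * Real.exp 3)) :=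
    mul_le_mul hx2 claim2 (by positivity) (by norm_num)
  calc G*H*((2*x)*(1/t^2 + 1/s^2))/B^2
      = (2*x) * (G*H/(B^2*t^2)) + (2*x) * (G*H/(B^2*s^2)) := by ring
    _ ≤ 2 * ((G/B)^q * (4/a^2 * Real.exp 3)) + 2 * ((G/B)^q * (4 * Real.exp 3)) := by
        linarith
    _ = 8 * Real.exp 3 * (1/a^2 + 1) * (G/B)^q := by ring

lemma phi_nonneg (x : ℝ) : 0 ≤ phi x := by
  unfold phi
  split_ifs with h1 h2
  · norm_num
  · positivity
  · exact le_refl 0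

lemma phi_neg (x : ℝ) : phi (-x) = phi x := by
  simp only [phi, abs_neg, neg_sq]

lemma phi_one_eq : phi 1 = 0 := by
  norm_num [phi]

lemma phi_half_eq : phi (1/2 : ℝ) = 1 := by
  norm_num [phi, abs_of_pos]

lemma deriv_phi_small {x : ℝ} (h : |x| < 1/2) : deriv phi x = 0 := by
  have hev : phi =ᶠ[nhds x] (fun _ => (1:ℝ)) := by
    have hmem : Set.Ioo (-(1/2) : ℝ) (1/2) ∈ nhds x := by
      apply Ioo_mem_nhds
      · linarith [neg_abs_le x]
      · linarith [le_abs_self x]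
    filter_upwards [hmem] with y hy
    have : |y| ≤ 1/2 := by
      rw [abs_le]; constructor <;> [linarith [hy.1]; linarith [hy.2]]
    simp only [phi]; rw [if_pos this]
  rw [hev.deriv_eq, deriv_const]

lemma phi_big_eq {x : ℝ} (h : 1 ≤ |x|) : phi x = 0 := by
  have h1 : ¬ (|x| ≤ 1/2) := by push_neg; linarith
  have h2 : ¬ (|x| < 1) := by push_neg; exact h
  simp only [phi]; rw [if_neg h1, if_neg h2]

lemma deriv_phi_big {x : ℝ} (h : 1 < |x|) : deriv phi x = 0 := by
  have hev : phi =ᶠ[nhds x] (fun _ => (0:ℝ)) := by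
    have hopen : IsOpen {y : ℝ | 1 < |y|} := by
      exact isOpen_lt continuous_const continuous_abs
    have hmem : {y : ℝ | 1 < |y|} ∈ nhds x := hopen.mem_nhds h
    filter_upwards [hmem] with y hy
    exact phi_big_eq (le_of_lt hy)
  rw [hev.deriv_eq, deriv_const]

lemma Blow_aux {y : ℝ} (h1 : 1/2 < y) (h2 : y < 1) :
    Real.exp (-3) ≤ Real.exp (-1/(y^2-1/4)) + Real.exp (-1/(1-y^2)) := by
  have ht : (0:ℝ) < 1 - y^2 := by nlinarith
  have hs : (0:ℝ) < y^2 - 1/4 := by nlinarith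
  rcases le_or_gt (3/8) (1 - y^2) with h | h
  · have hle : Real.exp (-3) ≤ Real.exp (-1/(1-y^2)) := by
      apply Real.exp_le_exp.mpr
      rw [neg_div]
      have : 1/(1-y^2) ≤ 8/3 := by rw [div_le_div_iff₀ ht (by norm_num)]; linarith
      linarith
    linarith [Real.exp_pos (-1/(y^2-1/4))]
  · have hs38 : (3/8:ℝ) ≤ y^2 - 1/4 := by linarith
    have hle : Real.exp (-3) ≤ Real.exp (-1/(y^2-1/4)) := by
      apply Real.exp_le_exp.mpr
      rw [neg_div]
      have : 1/(y^2-1/4) ≤ 8/3 := by rw [div_le_div_iff₀ hs (by norm_num)]; linarith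
      linarith
    linarith [Real.exp_pos (-1/(1-y^2))]

lemma phi_near_one {y : ℝ} (h1 : 1/2 < y) : phi y ≤ 16 * Real.exp 3 * (y-1)^2 := by
  rcases le_or_gt 1 y with h | h
  · have : phi y = 0 := phi_big_eq (by rw [abs_of_pos (by linarith)]; exact h)
    rw [this]; positivity
  · rw [phi_eq_mid h1 h]
    have ht : (0:ℝ) < 1 - y^2 := by nlinarith
    have hB := Blow_aux h1 h
    have hB0 : (0:ℝ) < Real.exp (-1/(y^2-1/4)) + Real.exp (-1/(1-y^2)) := by positivity
    have hG : Real.exp (-1/(1-y^2)) ≤ 4 * (1-y^2)^2 := by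
      have he : Real.exp (-1/(1-y^2)) = Real.exp (-(1/(1-y^2))) := by rw [neg_div]
      rw [he]
      calc Real.exp (-(1/(1-y^2))) ≤ 4/(1/(1-y^2))^2 := exp_neg_le4 _ (by positivity)
        _ = 4 * (1-y^2)^2 := by field_simp
    calc Real.exp (-1/(1-y^2)) / (Real.exp (-1/(y^2-1/4)) + Real.exp (-1/(1-y^2)))
        ≤ Real.exp (-1/(1-y^2)) / Real.exp (-3) := by
          apply div_le_div_of_nonneg_left (Real.exp_pos _).le (Real.exp_pos _) hB
      _ = Real.exp 3 * Real.exp (-1/(1-y^2)) := by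
          rw [Real.exp_neg, div_inv_eq_mul, mul_comm]
      _ ≤ Real.exp 3 * (4 * (1-y^2)^2) := by
          apply mul_le_mul_of_nonneg_left hG (Real.exp_pos _).le
      _ ≤ 16 * Real.exp 3 * (y-1)^2 := by
          have h5 : 0 ≤ 4 - (y+1)^2 := by nlinarith
          have h4 : (1-y^2)^2 ≤ 4*(y-1)^2 := by
            nlinarith [mul_nonneg (sq_nonneg (y-1)) h5]
          have h6 := mul_le_mul_of_nonneg_left h4 (Real.exp_pos 3).le
          nlinarith

lemma hasDerivAt_phi_one : HasDerivAt phi 0 1 := by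
  rw [hasDerivAt_iff_tendsto_slope]
  apply squeeze_zero_norm' (a := fun y => 16 * Real.exp 3 * |y - 1|)
  · have hmem : Set.Ioi (1/2 : ℝ) ∈ nhdsWithin (1:ℝ) {(1:ℝ)}ᶜ :=
      nhdsWithin_le_nhds (Ioi_mem_nhds (by norm_num))
    filter_upwards [hmem, self_mem_nhdsWithin] with y hy hy'
    have hy1 : y ≠ 1 := hy'
    have hynz : y - 1 ≠ 0 := sub_ne_zero.mpr hy1
    have hsl : slope phi 1 y = phi y / (y - 1) := by
      rw [slope_def_field, phi_one_eq, sub_zero]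
    rw [Real.norm_eq_abs, hsl, abs_div, abs_of_nonneg (phi_nonneg y)]
    rw [div_le_iff₀ (abs_pos.mpr hynz)]
    calc phi y ≤ 16 * Real.exp 3 * (y-1)^2 := phi_near_one hy
      _ = 16 * Real.exp 3 * |y - 1| * |y - 1| := by rw [← sq_abs]; ring
  · have hc : Continuous (fun y : ℝ => 16 * Real.exp 3 * |y - 1|) := by continuity
    have h0 := hc.tendsto 1
    simp only [sub_self, abs_zero, mul_zero] at h0
    exact h0.mono_left nhdsWithin_le_nhds

theorem stmt1 (p : ℝ) (hp : 1 < p) :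
    ∃ C > 0, ∀ x : ℝ, |deriv phi x| ≤ C * phi x ^ (1/p) := by
  have hp0 : (0:ℝ) < p := by linarith
  obtain ⟨C, hC0le, hCd1, hCpos⟩ :
      ∃ C : ℝ, 8*Real.exp 3*(1/(1-1/p)^2+1) ≤ C ∧ |deriv phi (1/2)| ≤ C ∧ 0 < C := by
    refine ⟨8*Real.exp 3*(1/(1-1/p)^2+1) + |deriv phi (1/2)| + 1, ?_, ?_, ?_⟩
    · have := abs_nonneg (deriv phi (1/2)); linarith
    · have h8 : (0:ℝ) ≤ 8*Real.exp 3*(1/(1-1/p)^2+1) := by positivity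
      linarith
    · have h8 : (0:ℝ) ≤ 8*Real.exp 3*(1/(1-1/p)^2+1) := by positivity
      have := abs_nonneg (deriv phi (1/2)); linarith
  refine ⟨C, hCpos, ?_⟩
  have key : ∀ y : ℝ, 0 ≤ y → |deriv phi y| ≤ C * phi y ^ (1/p) := by
    intro y hy
    rcases lt_trichotomy y (1/2) with h | h | h
    · rw [deriv_phi_small (by rw [abs_of_nonneg hy]; exact h), abs_zero]
      exact mul_nonneg hCpos.le (Real.rpow_nonneg (phi_nonneg y) _)
    · subst h
      rw [phi_half_eq, Real.one_rpow, mul_one]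
      exact hCd1
    · rcases lt_trichotomy y 1 with h2 | h2 | h2
      · rw [(hasDerivAt_phi_mid h h2).deriv]
        calc _ ≤ (8 * Real.exp 3 * (1/(1-1/p)^2 + 1)) * phi y ^ (1/p) := est hp h h2
          _ ≤ C * phi y ^ (1/p) :=
            mul_le_mul_of_nonneg_right hC0le (Real.rpow_nonneg (phi_nonneg y) _)
      · subst h2
        rw [hasDerivAt_phi_one.deriv, abs_zero]
        exact mul_nonneg hCpos.le (Real.rpow_nonneg (phi_nonneg 1) _)
      · rw [deriv_phi_big (by rw [abs_of_nonneg hy]; exact h2), abs_zero]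
        exact mul_nonneg hCpos.le (Real.rpow_nonneg (phi_nonneg y) _)
  intro x
  rcases le_or_gt 0 x with h | h
  · exact key x h
  · have hfun : (fun y : ℝ => phi (-y)) = phi := funext phi_neg
    have hd : deriv phi x = -(deriv phi (-x)) := by
      conv_lhs => rw [← hfun]
      exact deriv_comp_neg phi x
    rw [hd, abs_neg, ← phi_neg x]
    exact key (-x) (by linarith)
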